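/- Let δ ≥ 0 and let X be a proper geodesic δ-hyperbolic metric space. Let c and c' be geodesic lines in X whose images are at Hausdorff distance at most 2δ from each other. Let y' ∈ X, let z' be a nearest-point projection of y' onto the image of c', and let y'' and z'' be nearest-point projections of y' and of z', respectively, onto the image of c. Then d(y'', z'') ≤ 13δ. -/

import Mathlib

/-- `s` is a geodesic segment from `p` to `q`: the image of a unit-speed (isometric)
parameterization of the interval `[0, dist p q]` sending `0` to `p` and `dist p q` to `q`. -/
def IsGeodesicSegmentBetween {X : Type*} [MetricSpace X] (s : Set X) (p q : X) : Prop :=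
  ∃ f : ℝ → X, f 0 = p ∧ f (dist p q) = q ∧ s = f '' Set.Icc 0 (dist p q) ∧
    ∀ u ∈ Set.Icc 0 (dist p q), ∀ v ∈ Set.Icc 0 (dist p q), dist (f u) (f v) = |u - v|

/-- A metric space is geodesic if every pair of points is joined by a geodesic segment. -/
def IsGeodesicSpace (X : Type*) [MetricSpace X] : Prop :=
  ∀ p q : X, ∃ s : Set X, IsGeodesicSegmentBetween s p q

/-- `δ`-hyperbolicity via `δ`-thin triangles: each side of any geodesic triangle is contained
in the closed `δ`-neighborhood of the union of the other two sides. -/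
def DeltaThinTriangles (X : Type*) [MetricSpace X] (δ : ℝ) : Prop :=
  ∀ p q r : X, ∀ s₁ s₂ s₃ : Set X,
    IsGeodesicSegmentBetween s₁ p q → IsGeodesicSegmentBetween s₂ q r →
    IsGeodesicSegmentBetween s₃ p r →
    ∀ x ∈ s₃, Metric.infDist x (s₁ ∪ s₂) ≤ δ

/-- A geodesic line: an isometric embedding `c : ℝ → X`. -/
def IsGeodesicLine {X : Type*} [MetricSpace X] (c : ℝ → X) : Prop :=
  ∀ s t : ℝ, dist (c s) (c t) = |s - t|

/-- `a` is a nearest-point projection of `x` onto `A`. -/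
def IsNearestPointProj {X : Type*} [MetricSpace X] (A : Set X) (x a : X) : Prop :=
  a ∈ A ∧ dist x a = Metric.infDist x A

open Metric Set

lemma seg_props {X : Type*} [MetricSpace X] {s : Set X} {p q : X}
    (h : IsGeodesicSegmentBetween s p q) :
    p ∈ s ∧ q ∈ s ∧ IsCompact s ∧ IsPreconnected s ∧
      ∀ u ∈ s, dist p u + dist u q = dist p q := by
  obtain ⟨f, hf0, hfd, hs, hiso⟩ := h
  have hd : (0:ℝ) ≤ dist p q := dist_nonneg
  have h0 : (0:ℝ) ∈ Icc 0 (dist p q) := ⟨le_refl _, hd⟩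
  have hD : dist p q ∈ Icc 0 (dist p q) := ⟨hd, le_refl _⟩
  have hcont : ContinuousOn f (Icc 0 (dist p q)) := by
    have : LipschitzOnWith 1 f (Icc 0 (dist p q)) := by
      apply LipschitzOnWith.of_dist_le_mul
      intro x hx y hy
      rw [hiso x hx y hy, Real.dist_eq]
      simp
    exact this.continuousOn
  refine ⟨?_, ?_, ?_, ?_, ?_⟩
  · rw [hs]; exact ⟨0, h0, hf0⟩
  · rw [hs]; exact ⟨dist p q, hD, hfd⟩
  · rw [hs]; exact (isCompact_Icc).image_of_continuousOn hcont
  · rw [hs]; exact (isPreconnected_Icc).image f hcont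
  · intro u hu
    rw [hs] at hu
    obtain ⟨t, ht, rfl⟩ := hu
    have e1 : dist p (f t) = t := by
      rw [← hf0, hiso 0 h0 t ht, abs_of_nonpos (by linarith [ht.1])]; ring
    have e2 : dist (f t) q = dist p q - t := by
      have := hiso t ht _ hD
      rw [hfd] at this
      rw [this, abs_of_nonpos (by linarith [ht.2])]; ring
    rw [e1, e2]; ring

lemma line_seg {X : Type*} [MetricSpace X] {c : ℝ → X} (hc : IsGeodesicLine c) (a b : ℝ) :
    ∃ s : Set X, IsGeodesicSegmentBetween s (c a) (c b) ∧ s ⊆ Set.range c := by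
  have hd : dist (c a) (c b) = |a - b| := hc a b
  rcases le_total a b with hab | hab
  · refine ⟨(fun t => c (a + t)) '' Icc 0 (dist (c a) (c b)),
      ⟨fun t => c (a + t), by simp, ?_, rfl, ?_⟩, ?_⟩
    · rw [hd, abs_of_nonpos (by linarith)]
      norm_num
    · intro u _ v _
      rw [hc]
      congr 1
      ring
    · rintro x ⟨t, _, rfl⟩; exact ⟨a + t, rfl⟩
  · refine ⟨(fun t => c (a - t)) '' Icc 0 (dist (c a) (c b)),
      ⟨fun t => c (a - t), by simp, ?_, rfl, ?_⟩, ?_⟩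
    · rw [hd, abs_of_nonneg (by linarith)]
      norm_num
    · intro u _ v _
      rw [hc]
      rw [show a - u - (a - v) = -(u - v) by ring, abs_neg]
    · rintro x ⟨t, _, rfl⟩; exact ⟨a - t, rfl⟩

/-- Let `c` and `c'` be geodesic lines in a proper geodesic `δ`-hyperbolic space whose images
are at Hausdorff distance at most `2δ`. Let `y' ∈ X`, let `z'` be a nearest-point projection
of `y'` onto the image of `c'`, and let `y''` and `z''` be nearest-point projections of `y'`
and of `z'` onto the image of `c`. Then `dist y'' z'' ≤ 13δ`. -/
theorem projections_close {X : Type*} [MetricSpace X] [ProperSpace X]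
    (δ : ℝ) (hδ : 0 ≤ δ) (hgeo : IsGeodesicSpace X) (hthin : DeltaThinTriangles X δ)
    (c c' : ℝ → X) (hc : IsGeodesicLine c) (hc' : IsGeodesicLine c')
    (hHaus : EMetric.hausdorffEdist (Set.range c) (Set.range c') ≤ ENNReal.ofReal (2 * δ))
    (y' z' y'' z'' : X)
    (hz' : IsNearestPointProj (Set.range c') y' z')
    (hy'' : IsNearestPointProj (Set.range c) y' y'')
    (hz'' : IsNearestPointProj (Set.range c) z' z'') :
    dist y'' z'' ≤ 13 * δ := by
  classical
  -- Hausdorff distance facts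
  have hInf2δ : ∀ x ∈ Set.range c', Metric.infDist x (Set.range c) ≤ 2 * δ := by
    intro x hx
    have h1 : EMetric.infEdist x (Set.range c) ≤ ENNReal.ofReal (2 * δ) := by
      refine le_trans (EMetric.infEdist_le_hausdorffEdist_of_mem hx) ?_
      rwa [EMetric.hausdorffEdist_comm]
    calc Metric.infDist x (Set.range c) = (EMetric.infEdist x (Set.range c)).toReal := rfl
      _ ≤ (ENNReal.ofReal (2 * δ)).toReal := ENNReal.toReal_mono ENNReal.ofReal_ne_top h1
      _ = 2 * δ := ENNReal.toReal_ofReal (by linarith)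
  have hInf2δ' : ∀ x ∈ Set.range c, Metric.infDist x (Set.range c') ≤ 2 * δ := by
    intro x hx
    have h1 : EMetric.infEdist x (Set.range c') ≤ ENNReal.ofReal (2 * δ) :=
      le_trans (EMetric.infEdist_le_hausdorffEdist_of_mem hx) hHaus
    calc Metric.infDist x (Set.range c') = (EMetric.infEdist x (Set.range c')).toReal := rfl
      _ ≤ (ENNReal.ofReal (2 * δ)).toReal := ENNReal.toReal_mono ENNReal.ofReal_ne_top h1
      _ = 2 * δ := ENNReal.toReal_ofReal (by linarith)
  -- basic distance bounds
  have hzz'' : dist z' z'' ≤ 2 * δ := by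
    rw [hz''.2]; exact hInf2δ z' hz'.1
  have hy'z' : dist y' z' ≤ 2 * δ + dist y' y'' := by
    rw [hz'.2]
    calc Metric.infDist y' (Set.range c')
        ≤ Metric.infDist y'' (Set.range c') + dist y' y'' :=
          Metric.infDist_le_infDist_add_dist
      _ ≤ 2 * δ + dist y' y'' := by
          have := hInf2δ' y'' hy''.1
          linarith
  -- projection property of y''
  have hproj : ∀ x ∈ Set.range c, dist y' y'' ≤ dist y' x := by
    intro x hx
    rw [hy''.2]
    exact Metric.infDist_le_dist_of_mem hx
  -- build the triangle
  obtain ⟨a, ha⟩ := hy''.1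
  obtain ⟨b, hb⟩ := hz''.1
  obtain ⟨s₃, hs₃, hs₃sub⟩ := by
    have := line_seg hc a b
    rwa [ha, hb] at this
  obtain ⟨s₁, hs₁⟩ := hgeo y'' y'
  obtain ⟨s₂, hs₂⟩ := hgeo y' z''
  obtain ⟨hp₁, hq₁, hcpt₁, -, hadd₁⟩ := seg_props hs₁
  obtain ⟨hp₂, hq₂, hcpt₂, -, hadd₂⟩ := seg_props hs₂
  obtain ⟨hp₃, hq₃, hcpt₃, hconn₃, -⟩ := seg_props hs₃
  have hthin₃ := hthin y'' y' z'' s₁ s₂ s₃ hs₁ hs₂ hs₃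
  -- connectedness argument to find a point close to both other sides
  have hne₁ : s₁.Nonempty := ⟨y'', hp₁⟩
  have hne₂ : s₂.Nonempty := ⟨y', hp₂⟩
  obtain ⟨m, hm₃, hm₁, hm₂⟩ :
      ∃ m ∈ s₃, Metric.infDist m s₁ ≤ δ ∧ Metric.infDist m s₂ ≤ δ := by
    have hc1 : IsClosed {x : X | Metric.infDist x s₁ ≤ δ} :=
      isClosed_le (Metric.continuous_infDist_pt s₁) continuous_const
    have hc2 : IsClosed {x : X | Metric.infDist x s₂ ≤ δ} :=
      isClosed_le (Metric.continuous_infDist_pt s₂) continuous_const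
    have hcover : s₃ ⊆ {x | Metric.infDist x s₁ ≤ δ} ∪ {x | Metric.infDist x s₂ ≤ δ} := by
      intro x hx
      have hle := hthin₃ x hx
      obtain ⟨w, hw, hweq⟩ :=
        (hcpt₁.union hcpt₂).exists_infDist_eq_dist (hne₁.mono Set.subset_union_left) x
      rcases hw with hw | hw
      · left
        exact le_trans (Metric.infDist_le_dist_of_mem hw) (by rw [← hweq]; exact hle)
      · right
        exact le_trans (Metric.infDist_le_dist_of_mem hw) (by rw [← hweq]; exact hle)
    have h1ne : (s₃ ∩ {x | Metric.infDist x s₁ ≤ δ}).Nonempty :=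
      ⟨y'', hp₃, by
        simp only [Set.mem_setOf_eq]
        exact le_trans (Metric.infDist_le_dist_of_mem hp₁) (by simp [hδ])⟩
    have h2ne : (s₃ ∩ {x | Metric.infDist x s₂ ≤ δ}).Nonempty :=
      ⟨z'', hq₃, by
        simp only [Set.mem_setOf_eq]
        exact le_trans (Metric.infDist_le_dist_of_mem hq₂) (by simp [hδ])⟩
    obtain ⟨m, hm⟩ := (isPreconnected_closed_iff.mp hconn₃) _ _ hc1 hc2 hcover h1ne h2ne
    exact ⟨m, hm.1, hm.2.1, hm.2.2⟩
  obtain ⟨u, hu, hueq⟩ := hcpt₁.exists_infDist_eq_dist hne₁ m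
  obtain ⟨v, hv, hveq⟩ := hcpt₂.exists_infDist_eq_dist hne₂ m
  have hmu : dist m u ≤ δ := by rw [← hueq]; exact hm₁
  have hmv : dist m v ≤ δ := by rw [← hveq]; exact hm₂
  have e1 : dist y'' u + dist u y' = dist y'' y' := hadd₁ u hu
  have e2 : dist y' v + dist v z'' = dist y' z'' := hadd₂ v hv
  have i3 : dist y' y'' ≤ dist y' m := hproj m (hs₃sub hm₃)
  have i4 : dist y' m ≤ dist y' u + dist u m := dist_triangle _ _ _
  have i5 : dist y' m ≤ dist y' v + dist v m := dist_triangle _ _ _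
  have i6 : dist y'' z'' ≤ dist y'' m + dist m z'' := dist_triangle _ _ _
  have i7 : dist y'' m ≤ dist y'' u + dist u m := dist_triangle _ _ _
  have i8 : dist m z'' ≤ dist m v + dist v z'' := dist_triangle _ _ _
  have i9 : dist y' z'' ≤ dist y' z' + dist z' z'' := dist_triangle _ _ _
  have c1 : dist u m = dist m u := dist_comm _ _
  have c2 : dist v m = dist m v := dist_comm _ _
  have c3 : dist y' u = dist u y' := dist_comm _ _
  have c4 : dist y'' y' = dist y' y'' := dist_comm _ _
  have c5 : dist y' v = dist v y' := dist_comm _ _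
  linarith
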